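/- Let s, r, p be points in the Euclidean plane with s ≠ r, s ≠ p, dist(s,r) ≤ dist(s,p), and angle α = ∠(r s p) ≤ π/4. Let r' be the point on the segment from s to p with dist(s,r') = dist(s,r) (explicitly, r' = s + (dist(s,r)/dist(s,p))·(p − s)). Then for every real K with K ≥ 1/(1 − 2·sin(π/8)), one has dist(s,r) + K·(dist(r,r') + dist(r',p)) ≤ K·dist(s,p). -/

import Mathlib

open EuclideanGeometry Real

set_option maxHeartbeats 1000000 in
theorem stmt_2 (s r p : EuclideanSpace ℝ (Fin 2))
    (hsr : s ≠ r) (hsp : s ≠ p)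
    (hle : dist s r ≤ dist s p)
    (hangle : ∠ r s p ≤ π / 4)
    (r' : EuclideanSpace ℝ (Fin 2))
    (hr' : r' = s + (dist s r / dist s p) • (p - s))
    (K : ℝ) (hK : K ≥ 1 / (1 - 2 * Real.sin (π / 8))) :
    dist s r + K * (dist r r' + dist r' p) ≤ K * dist s p := by
  set a := dist s r with ha
  set b := dist s p with hb
  have ha0 : 0 < a := dist_pos.2 hsr
  have hb0 : 0 < b := dist_pos.2 hsp
  have hps : ‖p - s‖ = b := by rw [hb, dist_comm, dist_eq_norm]
  have hr's : r' - s = (a / b) • (p - s) := by rw [hr']; abel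
  -- dist s r' = a
  have hsr' : dist s r' = a := by
    rw [dist_eq_norm, norm_sub_rev, hr's, norm_smul, hps]
    rw [Real.norm_eq_abs, abs_of_pos (div_pos ha0 hb0)]
    field_simp
  -- dist r' p = b - a
  have hr'p : dist r' p = b - a := by
    have : r' - p = (a / b - 1) • (p - s) := by
      rw [hr']; rw [sub_smul, one_smul]; abel
    rw [dist_eq_norm, this, norm_smul, hps, Real.norm_eq_abs,
      abs_of_nonpos (by rw [sub_nonpos]; exact (div_le_one hb0).2 hle)]
    field_simp; ring
  -- angle
  have hangle' : ∠ r s r' = ∠ r s p := by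
    unfold EuclideanGeometry.angle
    have : r' -ᵥ s = (a / b) • (p -ᵥ s) := hr's
    rw [this, InnerProductGeometry.angle_smul_right_of_pos _ _ (div_pos ha0 hb0)]
  set α := ∠ r s p with hα
  have hα0 : 0 ≤ α := EuclideanGeometry.angle_nonneg r s p
  have hcos : Real.cos (π / 4) ≤ Real.cos α :=
    Real.cos_le_cos_of_nonneg_of_le_pi hα0 (by linarith [Real.pi_pos]) hangle
  -- law of cosines
  have hlaw : dist r r' * dist r r' = a * a + a * a - 2 * a * a * Real.cos α := by
    have h := EuclideanGeometry.law_cos r s r'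
    rw [hangle', dist_comm r' s, hsr', dist_comm r s, ← ha] at h
    exact h
  set s8 := Real.sin (π / 8) with hs8
  have hs80 : 0 ≤ s8 := Real.sin_nonneg_of_nonneg_of_le_pi (by positivity)
    (by linarith [Real.pi_pos])
  have hcos4 : Real.cos (π / 4) = 1 - 2 * s8 ^ 2 := by
    have h2 : Real.cos (2 * (π / 8)) = 2 * Real.cos (π / 8) ^ 2 - 1 := Real.cos_two_mul _
    have h3 : Real.sin (π / 8) ^ 2 + Real.cos (π / 8) ^ 2 = 1 := Real.sin_sq_add_cos_sq _
    have : (2 : ℝ) * (π / 8) = π / 4 := by ring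
    rw [this] at h2
    rw [hs8]; nlinarith
  have hd0 : 0 ≤ dist r r' := dist_nonneg
  have hdsq : dist r r' * dist r r' ≤ (2 * a * s8) * (2 * a * s8) := by
    have h1 : (a * a) * Real.cos (π / 4) ≤ (a * a) * Real.cos α :=
      mul_le_mul_of_nonneg_left hcos (mul_pos ha0 ha0).le
    calc dist r r' * dist r r' = a * a + a * a - 2 * a * a * Real.cos α := hlaw
      _ ≤ a * a + a * a - 2 * ((a * a) * Real.cos (π / 4)) := by linarith
      _ = (2 * a * s8) * (2 * a * s8) := by rw [hcos4]; ring
  have hd : dist r r' ≤ 2 * a * s8 := by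
    nlinarith [hdsq, hd0, mul_nonneg (by linarith : (0:ℝ) ≤ 2 * a) hs80]
  have hs8half : s8 < 1 / 2 := by
    have := Real.sin_lt (x := π / 8) (by positivity)
    have := Real.pi_lt_d2
    rw [hs8]; linarith
  have hK1 : 1 ≤ K * (1 - 2 * s8) := by
    rw [ge_iff_le, div_le_iff₀ (by linarith)] at hK
    linarith
  have hK0 : 0 < K := lt_of_lt_of_le (div_pos one_pos (by linarith)) hK
  rw [hr'p]
  have h2 : K * dist r r' ≤ K * (2 * a * s8) := mul_le_mul_of_nonneg_left hd hK0.le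
  have h3 : 1 * a ≤ (K * (1 - 2 * s8)) * a := mul_le_mul_of_nonneg_right hK1 ha0.le
  nlinarith [h2, h3]
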